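/- Define, for CPTN super-operators E, F on L(H_V): E ≤_P^e F iff for all effects M, N (on any extension system), M ⊑ I − E†(I − N) implies M ⊑ I − F†(I − N). Then E ≤_P^e F if and only if E − F is completely positive. -/

import Mathlib

open Matrix
open scoped ComplexOrder

noncomputable section

/-- Löwner order: `A ⊑ B` iff `B - A` is positive semidefinite. -/
def Loewner {d : Type*} [Fintype d] (A B : Matrix d d ℂ) : Prop :=
  (B - A).PosSemidef

/-- An effect: a positive semidefinite operator bounded above by the identity. -/
def IsEffect {d : Type*} [Fintype d] [DecidableEq d] (M : Matrix d d ℂ) : Prop :=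
  M.PosSemidef ∧ (1 - M).PosSemidef

/-- A (partial) density operator: positive semidefinite with trace at most 1. -/
def IsDensity {d : Type*} [Fintype d] (ρ : Matrix d d ℂ) : Prop :=
  ρ.PosSemidef ∧ ρ.trace.re ≤ 1

/-- An orthogonal projector: Hermitian idempotent. -/
def IsProj {d : Type*} [Fintype d] (P : Matrix d d ℂ) : Prop :=
  P.IsHermitian ∧ P * P = P

-- Demonic expectation: `inf_{M ∈ Θ} tr(M ρ)`, with the convention that the
-- infimum over the empty set is `tr ρ`.
open Classical in
def demExp {d : Type*} [Fintype d] (Θ : Set (Matrix d d ℂ)) (ρ : Matrix d d ℂ) : ℝ :=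
  if Θ = ∅ then ρ.trace.re else sInf ((fun M => (M * ρ).trace.re) '' Θ)

/-- Angelic expectation: `sup_{M ∈ Θ} tr(M ρ)`; note `sSup ∅ = 0` in `ℝ`,
matching the convention that the supremum over the empty set is `0`. -/
def angExp {d : Type*} [Fintype d] (Θ : Set (Matrix d d ℂ)) (ρ : Matrix d d ℂ) : ℝ :=
  sSup ((fun M => (M * ρ).trace.re) '' Θ)

/-- The extension `I_{Fin m} ⊗ Φ` of a super-operator `Φ`, acting blockwise. -/
def tensorMap {n : ℕ} (Φ : Matrix (Fin n) (Fin n) ℂ → Matrix (Fin n) (Fin n) ℂ) (m : ℕ)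
    (A : Matrix (Fin m × Fin n) (Fin m × Fin n) ℂ) :
    Matrix (Fin m × Fin n) (Fin m × Fin n) ℂ :=
  fun p q => Φ (Matrix.of fun a b => A (p.1, a) (q.1, b)) p.2 q.2

/-- Complete positivity: every extension `I_K ⊗ Φ` maps positive semidefinite
matrices to positive semidefinite matrices. -/
def IsCP {n : ℕ} (Φ : Matrix (Fin n) (Fin n) ℂ → Matrix (Fin n) (Fin n) ℂ) : Prop :=
  ∀ (m : ℕ) (A : Matrix (Fin m × Fin n) (Fin m × Fin n) ℂ),
    A.PosSemidef → (tensorMap Φ m A).PosSemidef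

/-- Trace-nonincreasing on positive operators. -/
def IsTNI {n : ℕ} (Φ : Matrix (Fin n) (Fin n) ℂ → Matrix (Fin n) (Fin n) ℂ) : Prop :=
  ∀ A : Matrix (Fin n) (Fin n) ℂ, A.PosSemidef → (Φ A).trace.re ≤ A.trace.re

/-- Trace-preserving on positive operators. -/
def IsTP {n : ℕ} (Φ : Matrix (Fin n) (Fin n) ℂ → Matrix (Fin n) (Fin n) ℂ) : Prop :=
  ∀ A : Matrix (Fin n) (Fin n) ℂ, A.PosSemidef → (Φ A).trace = A.trace

/-- CPTN super-operator: linear, completely positive, and trace-nonincreasing. -/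
def IsCPTN {n : ℕ} (Φ : Matrix (Fin n) (Fin n) ℂ → Matrix (Fin n) (Fin n) ℂ) : Prop :=
  IsLinearMap ℂ Φ ∧ IsCP Φ ∧ IsTNI Φ

/-- The Choi matrix `J(Φ) = (Φ ⊗ I)(Ω)` of `Φ`, where `Ω` is the maximally
entangled state on `H ⊗ H`. -/
def choi {n : ℕ} (Φ : Matrix (Fin n) (Fin n) ℂ → Matrix (Fin n) (Fin n) ℂ) :
    Matrix (Fin n × Fin n) (Fin n × Fin n) ℂ :=
  fun p q => (1 / (n : ℂ)) * Φ (Matrix.single p.2 q.2 1) p.1 q.1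


open scoped InnerProductSpace in
lemma psd_of_forall_quad {d : Type*} [Fintype d] [DecidableEq d] (X : Matrix d d ℂ)
    (h : ∀ x : d → ℂ, 0 ≤ star x ⬝ᵥ X *ᵥ x) : X.PosSemidef := by
  refine Matrix.PosSemidef.of_dotProduct_mulVec_nonneg ?_ fun x => h x
  rw [Matrix.isHermitian_iff_isSymmetric, LinearMap.isSymmetric_iff_inner_map_self_real]
  intro v
  have h1 : ⟪(Matrix.toEuclideanLin X) v, v⟫_ℂ = (starRingEnd ℂ) (star ((WithLp.equiv 2 _) v) ⬝ᵥ X *ᵥ ((WithLp.equiv 2 _) v)) := by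
    rw [← inner_conj_symm]
    simp [Matrix.toEuclideanLin_apply, PiLp.inner_apply, dotProduct, Matrix.mulVec, mul_comm]
  have h2 := h ((WithLp.equiv 2 _) v)
  have him : ((star ((WithLp.equiv 2 _) v) ⬝ᵥ X *ᵥ ((WithLp.equiv 2 _) v))).im = 0 := by
    have := (Complex.le_def.mp h2).2; simpa using this.symm
  rw [h1, Complex.conj_conj, Complex.conj_eq_iff_im.mpr him]

private lemma trace_mul_expand {d : Type*} [Fintype d] (X Y : Matrix d d ℂ) :
    (X * Y).trace = ∑ p, ∑ q, X p q * Y q p := by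
  simp [Matrix.trace, Matrix.diag, Matrix.mul_apply]

lemma quad_eq_trace {d : Type*} [Fintype d] (X : Matrix d d ℂ) (x : d → ℂ) :
    star x ⬝ᵥ X *ᵥ x = (X * Matrix.vecMulVec x (star x)).trace := by
  rw [trace_mul_expand]
  simp only [dotProduct, Matrix.mulVec, Matrix.vecMulVec_apply, Pi.star_apply,
    Finset.mul_sum, Finset.sum_mul, dotProduct]
  congr 1; ext i; congr 1; ext j; ring

lemma rankone_psd {d : Type*} [Fintype d] [DecidableEq d] (v : d → ℂ) :
    (Matrix.vecMulVec v (star v)).PosSemidef := by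
  apply psd_of_forall_quad
  intro x
  have : star x ⬝ᵥ (Matrix.vecMulVec v (star v)) *ᵥ x
      = star (star v ⬝ᵥ x) * (star v ⬝ᵥ x) := by
    simp only [dotProduct, Matrix.mulVec, Matrix.vecMulVec_apply, Pi.star_apply,
      Finset.mul_sum, Finset.sum_mul, star_sum, star_mul']
    rw [Finset.sum_comm]
    congr 1; ext i; congr 1; ext j; simp; ring
  rw [this]
  exact star_mul_self_nonneg _

lemma smul_psd {d : Type*} [Fintype d] [DecidableEq d] {A : Matrix d d ℂ} {c : ℝ}
    (hc : 0 ≤ c) (hA : A.PosSemidef) : (((c : ℂ)) • A).PosSemidef := by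
  apply psd_of_forall_quad
  intro x
  have h1 : star x ⬝ᵥ ((c : ℂ) • A) *ᵥ x = (c : ℂ) * (star x ⬝ᵥ A *ᵥ x) := by
    simp [Matrix.smul_mulVec, dotProduct_smul]
  rw [h1]
  exact mul_nonneg (by exact_mod_cast hc) (hA.dotProduct_mulVec_nonneg x)

lemma psd_diag_nonneg {d : Type*} [Fintype d] [DecidableEq d] {M : Matrix d d ℂ}
    (hM : M.PosSemidef) (i : d) : 0 ≤ M i i := by
  have := hM.dotProduct_mulVec_nonneg (Pi.single i 1)
  simpa [dotProduct, Pi.single_apply, Matrix.mulVec] using this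

lemma psd_trace_nonneg {d : Type*} [Fintype d] [DecidableEq d] {M : Matrix d d ℂ}
    (hM : M.PosSemidef) : 0 ≤ M.trace := by
  rw [Matrix.trace]
  exact Finset.sum_nonneg fun i _ => psd_diag_nonneg hM i

lemma trace_mul_psd_nonneg {d : Type*} [Fintype d] [DecidableEq d] {A B : Matrix d d ℂ}
    (hA : A.PosSemidef) (hB : B.PosSemidef) : 0 ≤ (A * B).trace := by
  open scoped MatrixOrder in obtain ⟨C, rfl⟩ := CStarAlgebra.nonneg_iff_eq_star_mul_self.mp hA.nonneg
  rw [Matrix.mul_assoc, Matrix.trace_mul_comm]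
  exact psd_trace_nonneg (hB.mul_mul_conjTranspose_same C)

lemma rankone_bound {d : Type*} [Fintype d] [DecidableEq d] (v : d → ℂ) :
    ((((∑ i, Complex.normSq (v i)) + 1 : ℝ) : ℂ) • 1 - Matrix.vecMulVec v (star v)).PosSemidef := by
  apply psd_of_forall_quad
  intro x
  set c : ℝ := (∑ i, Complex.normSq (v i)) + 1 with hc
  set s : ℂ := star v ⬝ᵥ x with hs
  have h1 : star x ⬝ᵥ ((c : ℂ) • 1 - Matrix.vecMulVec v (star v)) *ᵥ x
      = (c : ℂ) * ((∑ i, Complex.normSq (x i) : ℝ) : ℂ) - star s * s := by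
    rw [Matrix.sub_mulVec, dotProduct_sub]
    congr 1
    · simp only [Matrix.smul_mulVec, dotProduct_smul, Matrix.one_mulVec]
      congr 1
      push_cast
      simp only [dotProduct, Pi.star_apply]
      exact Finset.sum_congr rfl fun i _ => by simp [mul_comm, Complex.mul_conj]
    · simp only [dotProduct, Matrix.mulVec, Matrix.vecMulVec_apply, Pi.star_apply,
        Finset.mul_sum, Finset.sum_mul, star_sum, star_mul', hs, dotProduct]
      rw [Finset.sum_comm]
      congr 1; ext i; congr 1; ext j; simp; ring
  rw [h1]
  have h2 : star s * s = ((Complex.normSq s : ℝ) : ℂ) := by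
    simp [mul_comm, Complex.mul_conj]
  rw [h2, ← Complex.ofReal_mul, ← Complex.ofReal_sub]
  rw [Complex.zero_le_real]
  have hCS : Complex.normSq s ≤ (∑ i, Complex.normSq (v i)) * (∑ i, Complex.normSq (x i)) := by
    have habs : ‖s‖ ≤ ∑ i, ‖v i‖ * ‖x i‖ := by
      rw [hs]
      simp only [dotProduct, Pi.star_apply]
      refine le_trans (norm_sum_le _ _) ?_
      apply Finset.sum_le_sum
      intro i _
      simp [norm_mul]
    have hsq : (∑ i, ‖v i‖ * ‖x i‖) ^ 2
        ≤ (∑ i, ‖v i‖ ^ 2) * (∑ i, ‖x i‖ ^ 2) :=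
      Finset.sum_mul_sq_le_sq_mul_sq Finset.univ _ _
    calc Complex.normSq s = ‖s‖ ^ 2 := (Complex.sq_norm s).symm
      _ ≤ (∑ i, ‖v i‖ * ‖x i‖) ^ 2 := by
          apply pow_le_pow_left₀ (norm_nonneg s) habs
      _ ≤ (∑ i, ‖v i‖ ^ 2) * (∑ i, ‖x i‖ ^ 2) := hsq
      _ = (∑ i, Complex.normSq (v i)) * (∑ i, Complex.normSq (x i)) := by
          simp [Complex.sq_norm]
  have hxnn : 0 ≤ ∑ i, Complex.normSq (x i) :=
    Finset.sum_nonneg fun i _ => Complex.normSq_nonneg _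
  nlinarith [hCS, hxnn]

section TensorLemmas
variable {n : ℕ}

lemma tensor_trace_left (Φ : Matrix (Fin n) (Fin n) ℂ → Matrix (Fin n) (Fin n) ℂ) (m : ℕ)
    (A B : Matrix (Fin m × Fin n) (Fin m × Fin n) ℂ) :
    (tensorMap Φ m A * B).trace
      = ∑ p1 : Fin m, ∑ q1 : Fin m,
          (Φ (Matrix.of fun a b => A (p1, a) (q1, b))
            * Matrix.of (fun a b => B (q1, a) (p1, b))).trace := by
  simp only [trace_mul_expand, tensorMap, Fintype.sum_prod_type, Matrix.of_apply]
  refine Finset.sum_congr rfl fun p1 _ => ?_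
  exact Finset.sum_comm

lemma tensor_trace_right (Ψ : Matrix (Fin n) (Fin n) ℂ → Matrix (Fin n) (Fin n) ℂ) (m : ℕ)
    (A B : Matrix (Fin m × Fin n) (Fin m × Fin n) ℂ) :
    (A * tensorMap Ψ m B).trace
      = ∑ p1 : Fin m, ∑ q1 : Fin m,
          (Matrix.of (fun a b => A (p1, a) (q1, b))
            * Ψ (Matrix.of fun a b => B (q1, a) (p1, b))).trace := by
  simp only [trace_mul_expand, tensorMap, Fintype.sum_prod_type, Matrix.of_apply]
  refine Finset.sum_congr rfl fun p1 _ => ?_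
  exact Finset.sum_comm

lemma tensor_trace_dual (Φ Φ2 : Matrix (Fin n) (Fin n) ℂ → Matrix (Fin n) (Fin n) ℂ)
    (hadj : ∀ A B : Matrix (Fin n) (Fin n) ℂ, (Φ A * B).trace = (A * Φ2 B).trace) (m : ℕ)
    (A B : Matrix (Fin m × Fin n) (Fin m × Fin n) ℂ) :
    (tensorMap Φ m A * B).trace = (A * tensorMap Φ2 m B).trace := by
  rw [tensor_trace_left, tensor_trace_right]
  exact Finset.sum_congr rfl fun p1 _ => Finset.sum_congr rfl fun q1 _ => hadj _ _

lemma dual_psd_preserving (Φ Φ2 : Matrix (Fin n) (Fin n) ℂ → Matrix (Fin n) (Fin n) ℂ)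
    (hadj : ∀ A B : Matrix (Fin n) (Fin n) ℂ, (Φ A * B).trace = (A * Φ2 B).trace)
    (hΦ : IsCP Φ) (m : ℕ) (B : Matrix (Fin m × Fin n) (Fin m × Fin n) ℂ)
    (hB : B.PosSemidef) : (tensorMap Φ2 m B).PosSemidef := by
  apply psd_of_forall_quad
  intro x
  rw [quad_eq_trace, Matrix.trace_mul_comm, ← tensor_trace_dual Φ Φ2 hadj]
  exact trace_mul_psd_nonneg (hΦ m _ (rankone_psd x)) hB

end TensorLemmas

section MoreLemmas
variable {n : ℕ}

lemma cp_apply_psd (Φ : Matrix (Fin n) (Fin n) ℂ → Matrix (Fin n) (Fin n) ℂ)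
    (hΦ : IsCP Φ) {A : Matrix (Fin n) (Fin n) ℂ} (hA : A.PosSemidef) :
    (Φ A).PosSemidef := by
  have hAt : (Matrix.of fun (p q : Fin 1 × Fin n) => A p.2 q.2).PosSemidef := by
    apply psd_of_forall_quad
    intro x
    have h := hA.dotProduct_mulVec_nonneg (fun i => ∑ a : Fin 1, x (a, i))
    refine le_of_le_of_eq h ?_
    simp only [dotProduct, Matrix.mulVec, Fintype.sum_prod_type, Matrix.of_apply,
      Pi.star_apply, star_sum, Finset.sum_mul, Finset.mul_sum, Fin.sum_univ_one]
  have hT := hΦ 1 _ hAt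
  apply psd_of_forall_quad
  intro x
  have h := hT.dotProduct_mulVec_nonneg (fun p => x p.2)
  refine le_of_le_of_eq h ?_
  simp only [dotProduct, Matrix.mulVec, Fintype.sum_prod_type, tensorMap,
    Matrix.of_apply, Pi.star_apply, Finset.univ_unique, Finset.sum_singleton]
  rfl

lemma blockdiag_psd {m : ℕ} {C : Matrix (Fin n) (Fin n) ℂ} (hC : C.PosSemidef) :
    Matrix.PosSemidef
      (Matrix.of fun (p q : Fin m × Fin n) => if p.1 = q.1 then C p.2 q.2 else 0) := by
  apply psd_of_forall_quad
  intro x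
  have key : star x ⬝ᵥ (Matrix.of fun (p q : Fin m × Fin n) =>
        if p.1 = q.1 then C p.2 q.2 else 0) *ᵥ x
      = ∑ a : Fin m, star (fun i => x (a, i)) ⬝ᵥ C *ᵥ (fun i => x (a, i)) := by
    simp only [dotProduct, Matrix.mulVec, Fintype.sum_prod_type, Matrix.of_apply,
      Pi.star_apply]
    refine Finset.sum_congr rfl fun a _ => ?_
    refine Finset.sum_congr rfl fun i _ => ?_
    congr 1
    have hy : ∀ y : Fin n, (∑ b : Fin m, (if a = b then C i y else 0) * x (b, y))
        = C i y * x (a, y) := by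
      intro y
      rw [Finset.sum_eq_single a]
      · simp
      · intro b _ hb; simp [Ne.symm hb]
      · simp
    rw [Finset.sum_comm]
    exact Finset.sum_congr rfl fun y _ => hy y
  rw [key]
  exact Finset.sum_nonneg fun a _ => hC.dotProduct_mulVec_nonneg _

end MoreLemmas

section MoreLemmas2
variable {n : ℕ}

lemma tensorMap_sub_arg {Φ : Matrix (Fin n) (Fin n) ℂ → Matrix (Fin n) (Fin n) ℂ}
    (hΦ : IsLinearMap ℂ Φ) (m : ℕ) (A B : Matrix (Fin m × Fin n) (Fin m × Fin n) ℂ) :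
    tensorMap Φ m (A - B) = tensorMap Φ m A - tensorMap Φ m B := by
  ext p q
  simp only [tensorMap, Matrix.sub_apply]
  have hs : Φ ((Matrix.of fun a b => A (p.1, a) (q.1, b))
        - (Matrix.of fun a b => B (p.1, a) (q.1, b)))
      = Φ (Matrix.of fun a b => A (p.1, a) (q.1, b))
        - Φ (Matrix.of fun a b => B (p.1, a) (q.1, b)) := by
    have := (hΦ.mk' Φ).map_sub (Matrix.of fun a b => A (p.1, a) (q.1, b))
      (Matrix.of fun a b => B (p.1, a) (q.1, b))
    simpa using this
  calc Φ (Matrix.of fun a b => A (p.1, a) (q.1, b) - B (p.1, a) (q.1, b)) p.2 q.2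
      = Φ ((Matrix.of fun a b => A (p.1, a) (q.1, b))
          - (Matrix.of fun a b => B (p.1, a) (q.1, b))) p.2 q.2 := rfl
    _ = _ := by rw [hs]; rfl

lemma tensorMap_smul_arg {Φ : Matrix (Fin n) (Fin n) ℂ → Matrix (Fin n) (Fin n) ℂ}
    (hΦ : IsLinearMap ℂ Φ) (m : ℕ) (c : ℂ) (A : Matrix (Fin m × Fin n) (Fin m × Fin n) ℂ) :
    tensorMap Φ m (c • A) = c • tensorMap Φ m A := by
  ext p q
  simp only [tensorMap, Matrix.smul_apply]
  have hs : Φ (c • (Matrix.of fun a b => A (p.1, a) (q.1, b)))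
      = c • Φ (Matrix.of fun a b => A (p.1, a) (q.1, b)) := by
    have := (hΦ.mk' Φ).map_smul c (Matrix.of fun a b => A (p.1, a) (q.1, b))
    simpa using this
  calc Φ (Matrix.of fun a b => c • A (p.1, a) (q.1, b)) p.2 q.2
      = Φ (c • (Matrix.of fun a b => A (p.1, a) (q.1, b))) p.2 q.2 := rfl
    _ = _ := by rw [hs]; rfl

lemma tensorMap_sub_fun (E F : Matrix (Fin n) (Fin n) ℂ → Matrix (Fin n) (Fin n) ℂ) (m : ℕ)
    (A : Matrix (Fin m × Fin n) (Fin m × Fin n) ℂ) :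
    tensorMap (E - F) m A = tensorMap E m A - tensorMap F m A := by
  ext p q
  simp [tensorMap, Matrix.sub_apply]

lemma tensorMap_one {Φ : Matrix (Fin n) (Fin n) ℂ → Matrix (Fin n) (Fin n) ℂ}
    (hΦ : IsLinearMap ℂ Φ) (m : ℕ) :
    tensorMap Φ m 1
      = Matrix.of fun (p q : Fin m × Fin n) => if p.1 = q.1 then Φ 1 p.2 q.2 else 0 := by
  ext p q
  simp only [tensorMap, Matrix.of_apply]
  by_cases h : p.1 = q.1
  · simp only [h, if_true]
    congr 1
    ext a b
    simp [Matrix.one_apply, Prod.ext_iff, h]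
  · simp only [h, if_false]
    rw [show (Matrix.of fun a b => (1 : Matrix (Fin m × Fin n) (Fin m × Fin n) ℂ) (p.1, a) (q.1, b)) = (0 : Matrix (Fin n) (Fin n) ℂ) from by
      ext a b; simp [Matrix.one_apply, Prod.ext_iff, h]]
    have h0 : Φ (0 : Matrix (Fin n) (Fin n) ℂ) = 0 := by
      have := (hΦ.mk' Φ).map_zero
      simpa using this
    rw [h0]
    rfl

lemma one_sub_adj_one_psd (E E' : Matrix (Fin n) (Fin n) ℂ → Matrix (Fin n) (Fin n) ℂ)
    (hE : IsCPTN E)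
    (hadjE : ∀ A B : Matrix (Fin n) (Fin n) ℂ, (E A * B).trace = (A * E' B).trace) :
    ((1 : Matrix (Fin n) (Fin n) ℂ) - E' 1).PosSemidef := by
  apply psd_of_forall_quad
  intro x
  set W : Matrix (Fin n) (Fin n) ℂ := Matrix.vecMulVec x (star x) with hW
  have hWpsd : W.PosSemidef := rankone_psd x
  have htr : star x ⬝ᵥ (E' 1) *ᵥ x = (E W).trace := by
    rw [quad_eq_trace, Matrix.trace_mul_comm, ← hW, ← hadjE W 1, Matrix.mul_one]
  have hxx : star x ⬝ᵥ (1 : Matrix (Fin n) (Fin n) ℂ) *ᵥ x = W.trace := by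
    simp only [Matrix.one_mulVec, hW, Matrix.trace, Matrix.diag, Matrix.vecMulVec_apply,
      dotProduct, Pi.star_apply]
    exact Finset.sum_congr rfl fun i _ => mul_comm _ _
  have hq : star x ⬝ᵥ ((1 : Matrix (Fin n) (Fin n) ℂ) - E' 1) *ᵥ x = W.trace - (E W).trace := by
    rw [Matrix.sub_mulVec, dotProduct_sub, htr, hxx]
  rw [hq]
  have hEW : (E W).PosSemidef := cp_apply_psd E hE.2.1 hWpsd
  have h1 : 0 ≤ (E W).trace := psd_trace_nonneg hEW
  have h2 : 0 ≤ W.trace := psd_trace_nonneg hWpsd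
  have h3 : (E W).trace.re ≤ W.trace.re := hE.2.2 W hWpsd
  rw [Complex.le_def] at h1 h2 ⊢
  have e1 : (E W).trace.im = 0 := by simpa using h1.2.symm
  have e2 : W.trace.im = 0 := by simpa using h2.2.symm
  constructor
  · simp [h3]
  · simp [e1, e2]

lemma psd_zero {d : Type*} [Fintype d] [DecidableEq d] :
    (0 : Matrix d d ℂ).PosSemidef := by
  apply psd_of_forall_quad; intro x; simp

end MoreLemmas2

theorem partial_refinement_iff_cp {n : ℕ}
    (E F E' F' : Matrix (Fin n) (Fin n) ℂ → Matrix (Fin n) (Fin n) ℂ)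
    (hE : IsCPTN E) (hF : IsCPTN F)
    (hE'l : IsLinearMap ℂ E') (hF'l : IsLinearMap ℂ F')
    (hadjE : ∀ A B : Matrix (Fin n) (Fin n) ℂ, (E A * B).trace = (A * E' B).trace)
    (hadjF : ∀ A B : Matrix (Fin n) (Fin n) ℂ, (F A * B).trace = (A * F' B).trace) :
    (∀ (m : ℕ) (M N : Matrix (Fin m × Fin n) (Fin m × Fin n) ℂ),
        IsEffect M → IsEffect N →
        Loewner M (1 - tensorMap E' m (1 - N)) →
        Loewner M (1 - tensorMap F' m (1 - N))) ↔
      IsCP (E - F) := by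
  have hEext := dual_psd_preserving E E' hadjE hE.2.1
  have hFext := dual_psd_preserving F F' hadjF hF.2.1
  constructor
  · intro href m A hA
    rw [tensorMap_sub_fun]
    apply psd_of_forall_quad
    intro x
    set W : Matrix (Fin m × Fin n) (Fin m × Fin n) ℂ := Matrix.vecMulVec x (star x) with hWdef
    have hWpsd : W.PosSemidef := rankone_psd x
    set c : ℝ := (∑ i, Complex.normSq (x i)) + 1 with hcdef
    have hcpos : 0 < c := by
      have : 0 ≤ ∑ i, Complex.normSq (x i) :=
        Finset.sum_nonneg fun i _ => Complex.normSq_nonneg _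
      rw [hcdef]; linarith
    set P : Matrix (Fin m × Fin n) (Fin m × Fin n) ℂ := ((c⁻¹ : ℝ) : ℂ) • W with hPdef
    have hPpsd : P.PosSemidef := smul_psd (inv_nonneg.mpr hcpos.le) hWpsd
    have hcW : ((c : ℝ) : ℂ) • P = W := by
      rw [hPdef, smul_smul, ← Complex.ofReal_mul, mul_inv_cancel₀ hcpos.ne',
        Complex.ofReal_one, one_smul]
    have hbound : (((c : ℝ) : ℂ) • 1 - W).PosSemidef := rankone_bound x
    have h1P : ((1 : Matrix (Fin m × Fin n) (Fin m × Fin n) ℂ) - P).PosSemidef := by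
      have hsm := smul_psd (inv_nonneg.mpr hcpos.le) hbound
      have heq : ((c⁻¹ : ℝ) : ℂ) • (((c : ℝ) : ℂ) • (1 : Matrix (Fin m × Fin n) (Fin m × Fin n) ℂ) - W)
          = 1 - P := by
        rw [smul_sub, smul_smul, ← Complex.ofReal_mul, inv_mul_cancel₀ hcpos.ne',
          Complex.ofReal_one, one_smul, hPdef]
      rwa [heq] at hsm
    have hblock : ((1 : Matrix (Fin m × Fin n) (Fin m × Fin n) ℂ) - tensorMap E' m 1).PosSemidef := by
      rw [tensorMap_one hE'l]
      have hb := blockdiag_psd (m := m) (one_sub_adj_one_psd E E' hE hadjE)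
      have heq : (1 : Matrix (Fin m × Fin n) (Fin m × Fin n) ℂ)
            - (Matrix.of fun (p q : Fin m × Fin n) => if p.1 = q.1 then E' 1 p.2 q.2 else 0)
          = Matrix.of fun (p q : Fin m × Fin n) =>
              if p.1 = q.1 then ((1 : Matrix (Fin n) (Fin n) ℂ) - E' 1) p.2 q.2 else 0 := by
        ext p q
        by_cases h : p.1 = q.1
        · simp [Matrix.one_apply, Matrix.sub_apply, Prod.ext_iff, h]
        · simp [Matrix.one_apply, Matrix.sub_apply, Prod.ext_iff, h]
      rw [heq]
      exact hb
    set M : Matrix (Fin m × Fin n) (Fin m × Fin n) ℂ := 1 - tensorMap E' m P with hMdef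
    have hMeff : IsEffect M := by
      constructor
      · have heq2 : M = ((1 : Matrix (Fin m × Fin n) (Fin m × Fin n) ℂ) - tensorMap E' m 1)
            + tensorMap E' m ((1 : Matrix (Fin m × Fin n) (Fin m × Fin n) ℂ) - P) := by
          rw [hMdef, tensorMap_sub_arg hE'l]; abel
        rw [heq2]
        exact hblock.add (hEext m _ h1P)
      · have heq2 : (1 : Matrix (Fin m × Fin n) (Fin m × Fin n) ℂ) - M = tensorMap E' m P := by
          rw [hMdef, sub_sub_cancel]
        rw [heq2]
        exact hEext m _ hPpsd
    set N : Matrix (Fin m × Fin n) (Fin m × Fin n) ℂ := 1 - P with hNdef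
    have h1N : (1 : Matrix (Fin m × Fin n) (Fin m × Fin n) ℂ) - N = P := by
      rw [hNdef, sub_sub_cancel]
    have hNeff : IsEffect N := ⟨h1P, by rw [h1N]; exact hPpsd⟩
    have hlw : Loewner M (1 - tensorMap E' m (1 - N)) := by
      rw [Loewner, h1N, hMdef, sub_self]
      exact psd_zero
    have hres := href m M N hMeff hNeff hlw
    rw [Loewner, h1N] at hres
    have heq3 : (1 : Matrix (Fin m × Fin n) (Fin m × Fin n) ℂ) - tensorMap F' m P - M
        = tensorMap E' m P - tensorMap F' m P := by
      rw [hMdef]; abel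
    rw [heq3] at hres
    have hD : (tensorMap E' m W - tensorMap F' m W).PosSemidef := by
      have hsm := smul_psd hcpos.le hres
      rw [← hcW, tensorMap_smul_arg hE'l, tensorMap_smul_arg hF'l, ← smul_sub]
      exact hsm
    rw [quad_eq_trace, Matrix.sub_mul, Matrix.trace_sub,
      tensor_trace_dual E E' hadjE, tensor_trace_dual F F' hadjF,
      ← Matrix.trace_sub, ← Matrix.mul_sub]
    exact trace_mul_psd_nonneg hA hD
  · intro hcp m M N hMeff hNeff hlw
    have hadjEF : ∀ A B : Matrix (Fin n) (Fin n) ℂ,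
        ((E - F) A * B).trace = (A * (E' B - F' B)).trace := by
      intro A B
      simp only [Pi.sub_apply, Matrix.sub_mul, Matrix.mul_sub, Matrix.trace_sub,
        hadjE A B, hadjF A B]
    have hD := dual_psd_preserving (E - F) (fun B => E' B - F' B) hadjEF hcp m (1 - N) hNeff.2
    have htd : tensorMap (fun B => E' B - F' B) m (1 - N)
        = tensorMap E' m (1 - N) - tensorMap F' m (1 - N) := by
      ext p q; simp [tensorMap, Matrix.sub_apply]
    rw [htd] at hD
    rw [Loewner] at hlw ⊢
    have heq : (1 : Matrix (Fin m × Fin n) (Fin m × Fin n) ℂ) - tensorMap F' m (1 - N) - M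
        = ((1 : Matrix (Fin m × Fin n) (Fin m × Fin n) ℂ) - tensorMap E' m (1 - N) - M)
          + (tensorMap E' m (1 - N) - tensorMap F' m (1 - N)) := by abel
    rw [heq]
    exact hlw.add hD
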